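/- For fixed k ≥ 0, the ordinary generating function Σ_{n≥k} U_r(n,k) t^n equals t^k / Π_{j=0}^{k} (1 - (j²+r)t), as an identity of formal power series. -/

import Mathlib

/-- `centralU r n k` is the r-central factorial number with even indices of the second kind. -/
def centralU (r : ℕ) : ℕ → ℕ → ℤ
  | 0, 0 => 1
  | 0, _ + 1 => 0
  | n + 1, 0 => (r : ℤ) ^ (n + 1)
  | n + 1, k + 1 => centralU r n k + (((k : ℤ) + 1) ^ 2 + r) * centralU r n (k + 1)

lemma centralU_zero (r : ℕ) : ∀ n k : ℕ, n < k → centralU r n k = 0 := by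
  intro n
  induction n with
  | zero => intro k hk; match k, hk with
            | k + 1, _ => rfl
  | succ n ih =>
      intro k hk
      match k, hk with
      | k + 1, hk =>
        show centralU r n k + (((k : ℤ) + 1) ^ 2 + r) * centralU r n (k + 1) = 0
        rw [ih k (by omega), ih (k+1) (by omega)]
        ring

open PowerSeries

noncomputable def F (r k : ℕ) : PowerSeries ℚ :=
  PowerSeries.mk fun n => if k ≤ n then (centralU r n k : ℚ) else 0

lemma base (r : ℕ) : F r 0 * (1 - C ((0:ℚ)^2 + r) * X) = 1 := by
  rw [show F r 0 * (1 - C ((0:ℚ)^2 + r) * X)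
      = F r 0 - C ((0:ℚ)^2 + r) * (X * F r 0) by ring]
  ext n
  cases n with
  | zero => simp [F, centralU]
  | succ n =>
      simp only [map_sub, PowerSeries.coeff_mk, PowerSeries.coeff_C_mul,
        PowerSeries.coeff_succ_X_mul, F, Nat.zero_le, if_true]
      have h1 : centralU r (n+1) 0 = (r:ℤ)^(n+1) := rfl
      have h2 : centralU r n 0 = (r:ℤ)^n := by cases n <;> rfl
      rw [h1, h2, PowerSeries.coeff_one]
      push_cast
      simp [pow_succ]
      ring

lemma key (r k : ℕ) :
    F r (k+1) * (1 - C (((k+1 : ℕ) : ℚ)^2 + r) * X) = X * F r k := by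
  rw [show F r (k+1) * (1 - C (((k+1 : ℕ) : ℚ)^2 + r) * X)
      = F r (k+1) - C (((k+1 : ℕ) : ℚ)^2 + r) * (X * F r (k+1)) by ring]
  ext n
  cases n with
  | zero => simp [F]
  | succ n =>
      simp only [map_sub, PowerSeries.coeff_mk, PowerSeries.coeff_C_mul,
        PowerSeries.coeff_succ_X_mul, F]
      have hrec : centralU r (n+1) (k+1)
          = centralU r n k + (((k : ℤ) + 1) ^ 2 + r) * centralU r n (k + 1) := rfl
      by_cases h : k ≤ n
      · simp only [Nat.add_le_add_iff_right, h, if_true, hrec]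
        by_cases h2 : k + 1 ≤ n
        · simp only [h2, if_true]
          push_cast
          ring
        · have : centralU r n (k+1) = 0 := centralU_zero r n (k+1) (by omega)
          simp [h2, this]
      · have h2 : ¬ (k + 1 ≤ n + 1) := by omega
        have h3 : ¬ (k + 1 ≤ n) := by omega
        simp [h, h2, h3]

open PowerSeries in
theorem centralU_ogf (r k : ℕ) :
    (PowerSeries.mk fun n => if k ≤ n then (centralU r n k : ℚ) else 0) *
        ∏ j ∈ Finset.range (k + 1), (1 - PowerSeries.C ((j : ℚ) ^ 2 + r) * PowerSeries.X) =
      PowerSeries.X ^ k := by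
  show F r k * _ = _
  induction k with
  | zero => simpa [Finset.prod_range_one] using base r
  | succ k ih =>
      rw [Finset.prod_range_succ, show
        F r (k+1) * ((∏ j ∈ Finset.range (k + 1),
            (1 - PowerSeries.C ((j : ℚ) ^ 2 + r) * PowerSeries.X)) *
          (1 - PowerSeries.C (((k+1 : ℕ) : ℚ) ^ 2 + r) * PowerSeries.X))
        = (F r (k+1) * (1 - PowerSeries.C (((k+1 : ℕ) : ℚ) ^ 2 + r) * PowerSeries.X)) *
          ∏ j ∈ Finset.range (k + 1),
            (1 - PowerSeries.C ((j : ℚ) ^ 2 + r) * PowerSeries.X) by push_cast; ring,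
        key r k, mul_assoc, ih, pow_succ]
      ring
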